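/- Let n be a positive integer, x ∈ {0,1}^n, y ∈ ℝ^n with y_i ≠ 0 for every i, and let f ∈ ℝ^n be the soft decoder output. Define the estimated codeword x̂ ∈ {0,1}^n by x̂_i = bin(sign(f_i · y_i)), the multiplicative noise z̃_{s,i} = (1 − 2x_i) · y_i, its binarization z̃_i = bin(sign(z̃_{s,i})) ∈ {0,1}, and the binary cross entropy loss l_BCE(x, f) = −Σ_{i=1}^n [ z̃_i · log(1−σ(f_i)) + (1−z̃_i) · log σ(f_i) ]. Then the number of bit errors is upper bounded by the scaled binary cross entropy loss: d_H(x, x̂) ≤ (1/log 2) · l_BCE(x, f). -/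

import Mathlib

open MeasureTheory Real

/-- `sgn α = 1` if `α ≥ 0` and `−1` otherwise. -/
noncomputable def sgn (α : ℝ) : ℝ := if 0 ≤ α then 1 else -1

/-- `bin α = (1 − α)/2`. -/
noncomputable def bin (α : ℝ) : ℝ := (1 - α) / 2

/-- `hardBit α` is the Boolean encoding (false ↔ 0, true ↔ 1) of `bin (sgn α)`. -/
noncomputable def hardBit (α : ℝ) : Bool := if 0 ≤ α then false else true

/-- Real value of a bit (false ↔ 0, true ↔ 1). -/
def bitVal (b : Bool) : ℝ := if b then 1 else 0

/-- The step function `u`: `u α = 0` if `α ≤ 0` and `1` otherwise. -/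
noncomputable def stepu (α : ℝ) : ℝ := if α ≤ 0 then 0 else 1

/-- The sigmoid `σ α = 1/(1 + e^{−α})`. -/
noncomputable def sigm (α : ℝ) : ℝ := 1 / (1 + Real.exp (-α))

/-- The 0–1 loss. -/
noncomputable def l01 (α : ℝ) : ℝ := if α ≤ 0 then 1 else 0

/-- Binary cross entropy loss `l_BCE(x, w)` with binarized multiplicative noise
`z̃ᵢ = bin (sgn ((1 − 2 xᵢ) yᵢ))`, natural logarithms. -/
noncomputable def lBCE (n : ℕ) (x : Fin n → Bool) (y : Fin n → ℝ) (w : Fin n → ℝ) : ℝ :=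
  -∑ i, (bin (sgn ((1 - 2 * bitVal (x i)) * y i)) * Real.log (1 - sigm (w i))
        + (1 - bin (sgn ((1 - 2 * bitVal (x i)) * y i))) * Real.log (sigm (w i)))


private lemma key' (z fi : ℝ) :
    -(z * Real.log (1 - sigm fi) + (1 - z) * Real.log (sigm fi))
      = z * fi + Real.log (1 + Real.exp (-fi)) := by
  have hE : (0:ℝ) < Real.exp (-fi) := Real.exp_pos _
  have hD : (0:ℝ) < 1 + Real.exp (-fi) := by linarith
  have h1 : (1:ℝ) - sigm fi = Real.exp (-fi) / (1 + Real.exp (-fi)) := by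
    field_simp [sigm]
    rw [sub_mul, sigm, one_div, inv_mul_cancel₀ hD.ne']; ring
  have hlog1 : Real.log (1 - sigm fi) = -fi - Real.log (1 + Real.exp (-fi)) := by
    rw [h1, Real.log_div hE.ne' hD.ne', Real.log_exp]
  have hlog2 : Real.log (sigm fi) = -Real.log (1 + Real.exp (-fi)) := by
    rw [sigm, Real.log_div one_ne_zero hD.ne', Real.log_one]; ring
  rw [hlog1, hlog2]; ring

private lemma L0' (fi : ℝ) : 0 ≤ Real.log (1 + Real.exp (-fi)) :=
  Real.log_nonneg (by nlinarith [Real.exp_pos (-fi)])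

private lemma L1' {fi : ℝ} (h : fi ≤ 0) : Real.log 2 ≤ Real.log (1 + Real.exp (-fi)) := by
  apply Real.log_le_log (by norm_num)
  have := Real.one_le_exp (by linarith : (0:ℝ) ≤ -fi)
  linarith

private lemma L2' {fi : ℝ} (h : 0 ≤ fi) : Real.log 2 ≤ fi + Real.log (1 + Real.exp (-fi)) := by
  have hE : (0:ℝ) < Real.exp (-fi) := Real.exp_pos _
  have : fi + Real.log (1 + Real.exp (-fi)) = Real.log (Real.exp fi + 1) := by
    rw [← Real.log_exp fi, ← Real.log_mul (Real.exp_pos fi).ne' (by positivity)]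
    rw [Real.log_exp]
    congr 1
    rw [mul_add, mul_one, ← Real.exp_add]
    simp
  rw [this]
  apply Real.log_le_log (by norm_num)
  have := Real.one_le_exp h
  linarith

private lemma L3' (fi : ℝ) : 0 ≤ fi + Real.log (1 + Real.exp (-fi)) := by
  have h : Real.log (Real.exp (-fi)) ≤ Real.log (1 + Real.exp (-fi)) :=
    Real.log_le_log (Real.exp_pos _) (by linarith [Real.exp_pos (-fi)])
  rw [Real.log_exp] at h; linarith

private lemma per_term' (b : Bool) (yi fi : ℝ) (hy : yi ≠ 0) :
    (if (b ≠ hardBit (fi * yi)) then (1:ℝ) else 0) * Real.log 2 ≤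
      bin (sgn ((1 - 2 * bitVal b) * yi)) * fi + Real.log (1 + Real.exp (-fi)) := by
  rcases hy.lt_or_gt with hyn | hyp <;> cases b <;>
    simp only [bitVal, hardBit, bin, sgn, Bool.false_eq_true, if_true, if_false] <;>
    split_ifs <;>
    simp_all <;>
    first
      | exact L0' fi
      | exact L3' fi
      | exact L1' (by nlinarith)
      | exact L2' (by nlinarith)

/-- the number of bit errors of the hard estimate `x̂ᵢ = bin (sgn (fᵢ·yᵢ))`
is upper bounded by the scaled binary cross entropy loss `(1/log 2)·l_BCE(x, f)`. -/
theorem hamming_le_scaled_bce (n : ℕ) (hn : 0 < n)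
    (x : Fin n → Bool) (y : Fin n → ℝ) (hy : ∀ i, y i ≠ 0) (f : Fin n → ℝ) :
    (hammingDist x (fun i => hardBit (f i * y i)) : ℝ) ≤
      (1 / Real.log 2) * lBCE n x y f := by
  have hlog2 : (0:ℝ) < Real.log 2 := Real.log_pos (by norm_num)
  rw [one_div, inv_mul_eq_div, le_div_iff₀ hlog2]
  have hrw : lBCE n x y f
      = ∑ i, (bin (sgn ((1 - 2 * bitVal (x i)) * y i)) * f i
          + Real.log (1 + Real.exp (-(f i)))) := by
    unfold lBCE
    rw [← Finset.sum_neg_distrib]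
    exact Finset.sum_congr rfl fun i _ => key' _ _
  have hd : ((hammingDist x (fun i => hardBit (f i * y i)) : ℕ) : ℝ)
      = ∑ i, (if x i ≠ hardBit (f i * y i) then (1:ℝ) else 0) := by
    rw [hammingDist, Finset.card_filter]
    push_cast
    simp [apply_ite]
  rw [hrw, hd, Finset.sum_mul]
  exact Finset.sum_le_sum fun i _ => per_term' (x i) (y i) (f i) (hy i)
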